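/- Let ε > 0 and let ≽ be a preference on the simplex Δ ⊆ ℝ^{d+1} that is a continuous weak order and satisfies: (Extremality) there are degenerate lotteries p̄ and p̲ with p̄ ≽ p ≽ p̲ for every p ∈ Δ; (Monotonicity) if λ, λ' ∈ [0,1] with λ > λ' then λp̄+(1−λ)p̲ ≻ λ'p̄+(1−λ')p̲; (ε-Reduction of compound lotteries) whenever p₀ ∼ α₀p̄+(1−α₀)p̲, p₁ ∼ α₁p̄+(1−α₁)p̲ and λp₀+(1−λ)p₁ ∼ αp̄+(1−α)p̲ for λ ∈ [0,1], one has |α − (λα₀+(1−λ)α₁)| < ε. Then there exist functions u, ℓ : Δ → [0,1] such that: (1) u represents ≽ (p ≽ q iff u(p) ≥ u(q)) and u(Δ) = ℓ(Δ) = [0,1]; (2) ℓ is affine, i.e. ℓ(λp+(1−λ)q) = λℓ(p)+(1−λ)ℓ(q) for all p,q ∈ Δ and λ ∈ [0,1]; (3) |u(p) − ℓ(p)| < (|supp(p)| − 1)·ε for every nondegenerate p ∈ Δ, u(δᵢ) = ℓ(δᵢ) for every degenerate lottery δᵢ, and sup_{p∈Δ}|u(p)−ℓ(p)| < d·ε;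 (4) ℓ is the unique affine function on Δ that agrees with u on all degenerate lotteries. -/
import Mathlib


/-- Theorem `thm:EU`, direct part: if a continuous weak order on the
simplex satisfies Extremality, Monotonicity and ε-Reduction of compound lotteries,
then there are `u, ℓ : Δ → [0,1]`, `u` representing `≽`, `ℓ` affine, with
`|u p - ℓ p| < (|supp p| - 1)·ε` for nondegenerate `p`, agreement on degenerate
lotteries, `|u - ℓ| < d·ε` uniformly, and `ℓ` unique. -/
theorem stmt_0 (d : ℕ) (hd : 1 ≤ d) (ε : ℝ) (hε : 0 < ε)
    (R : (Fin (d + 1) → ℝ) → (Fin (d + 1) → ℝ) → Prop)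
    (Δ : Set (Fin (d + 1) → ℝ)) (hΔ : Δ = stdSimplex ℝ (Fin (d + 1)))
    (hcomp : ∀ p ∈ Δ, ∀ q ∈ Δ, R p q ∨ R q p)
    (htrans : ∀ p ∈ Δ, ∀ q ∈ Δ, ∀ r ∈ Δ, R p q → R q r → R p r)
    (hcont : ∀ p ∈ Δ, IsClosed {q | q ∈ Δ ∧ R q p} ∧ IsClosed {q | q ∈ Δ ∧ R p q})
    (i₀ i₁ : Fin (d + 1)) (pbar punder : Fin (d + 1) → ℝ)
    (hpbar : pbar = Pi.single i₀ 1) (hpunder : punder = Pi.single i₁ 1)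
    (hext : ∀ p ∈ Δ, R pbar p ∧ R p punder)
    (hmono : ∀ l l' : ℝ, l ∈ Set.Icc (0 : ℝ) 1 → l' ∈ Set.Icc (0 : ℝ) 1 → l' < l →
      R (l • pbar + (1 - l) • punder) (l' • pbar + (1 - l') • punder) ∧
      ¬ R (l' • pbar + (1 - l') • punder) (l • pbar + (1 - l) • punder))
    (hred : ∀ p₀ ∈ Δ, ∀ p₁ ∈ Δ, ∀ l α₀ α₁ α : ℝ,
      l ∈ Set.Icc (0 : ℝ) 1 → α₀ ∈ Set.Icc (0 : ℝ) 1 → α₁ ∈ Set.Icc (0 : ℝ) 1 →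
      α ∈ Set.Icc (0 : ℝ) 1 →
      (R p₀ (α₀ • pbar + (1 - α₀) • punder) ∧ R (α₀ • pbar + (1 - α₀) • punder) p₀) →
      (R p₁ (α₁ • pbar + (1 - α₁) • punder) ∧ R (α₁ • pbar + (1 - α₁) • punder) p₁) →
      (R (l • p₀ + (1 - l) • p₁) (α • pbar + (1 - α) • punder) ∧
        R (α • pbar + (1 - α) • punder) (l • p₀ + (1 - l) • p₁)) →
      |α - (l * α₀ + (1 - l) * α₁)| < ε) :
    ∃ u ℓ : (Fin (d + 1) → ℝ) → ℝ,
      -- (1) u represents ≽ and u(Δ) = ℓ(Δ) = [0,1]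
      (∀ p ∈ Δ, ∀ q ∈ Δ, (R p q ↔ u q ≤ u p)) ∧
      u '' Δ = Set.Icc 0 1 ∧ ℓ '' Δ = Set.Icc 0 1 ∧
      -- (2) ℓ is affine
      (∀ p ∈ Δ, ∀ q ∈ Δ, ∀ t ∈ Set.Icc (0 : ℝ) 1,
        ℓ (t • p + (1 - t) • q) = t * ℓ p + (1 - t) * ℓ q) ∧
      -- (3) closeness
      (∀ p ∈ Δ, 2 ≤ Nat.card {i : Fin (d + 1) // 0 < p i} →
        |u p - ℓ p| < ((Nat.card {i : Fin (d + 1) // 0 < p i} : ℝ) - 1) * ε) ∧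
      (∀ i : Fin (d + 1), u (Pi.single i 1) = ℓ (Pi.single i 1)) ∧
      (∀ p ∈ Δ, |u p - ℓ p| < (d : ℝ) * ε) ∧
      -- (4) uniqueness of ℓ
      (∀ ℓ' : (Fin (d + 1) → ℝ) → ℝ,
        (∀ p ∈ Δ, ∀ q ∈ Δ, ∀ t ∈ Set.Icc (0 : ℝ) 1,
          ℓ' (t • p + (1 - t) • q) = t * ℓ' p + (1 - t) * ℓ' q) →
        (∀ i : Fin (d + 1), ℓ' (Pi.single i 1) = u (Pi.single i 1)) →
        ∀ p ∈ Δ, ℓ' p = ℓ p) := by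
  classical
  subst hΔ hpbar hpunder
  have hδmem : ∀ i : Fin (d + 1), Pi.single i (1 : ℝ) ∈ stdSimplex ℝ (Fin (d + 1)) :=
    fun i => single_mem_stdSimplex ℝ i
  have hpr : ∀ p ∈ stdSimplex ℝ (Fin (d + 1)), (∀ i, 0 ≤ p i) ∧ ∑ i, p i = 1 :=
    fun p hp => hp
  obtain ⟨mix, hmixdef⟩ : ∃ mix : ℝ → (Fin (d + 1) → ℝ),
      ∀ α, mix α = α • (Pi.single i₀ 1 : Fin (d + 1) → ℝ)
        + (1 - α) • (Pi.single i₁ 1 : Fin (d + 1) → ℝ) := ⟨_, fun _ => rfl⟩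
  have hmixmem : ∀ α : ℝ, α ∈ Set.Icc (0 : ℝ) 1 → mix α ∈ stdSimplex ℝ (Fin (d + 1)) := by
    intro α hα
    rw [hmixdef]
    exact (convex_stdSimplex ℝ (Fin (d + 1))) (hδmem i₀) (hδmem i₁) hα.1
      (by linarith [hα.2]) (by ring)
  have mix0 : mix 0 = Pi.single i₁ 1 := by rw [hmixdef]; simp
  have mix1 : mix 1 = Pi.single i₀ 1 := by rw [hmixdef]; simp
  have hrefl : ∀ p ∈ stdSimplex ℝ (Fin (d + 1)), R p p :=
    fun p hp => (hcomp p hp p hp).elim id id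
  have hmono' : ∀ l l' : ℝ, l ∈ Set.Icc (0 : ℝ) 1 → l' ∈ Set.Icc (0 : ℝ) 1 → l' < l →
      R (mix l) (mix l') ∧ ¬ R (mix l') (mix l) := by
    intro l l' hl hl' hlt
    rw [hmixdef, hmixdef]
    exact hmono l l' hl hl' hlt
  have hcont_mix : Continuous mix := by
    have : mix = fun α : ℝ => α • (Pi.single i₀ 1 : Fin (d + 1) → ℝ)
        + (1 - α) • (Pi.single i₁ 1 : Fin (d + 1) → ℝ) := funext hmixdef
    rw [this]
    fun_prop
  have hexists : ∀ p ∈ stdSimplex ℝ (Fin (d + 1)),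
      ∃ α, α ∈ Set.Icc (0 : ℝ) 1 ∧ R p (mix α) ∧ R (mix α) p := by
    intro p hp
    have hA : IsClosed {α : ℝ | α ∈ Set.Icc (0 : ℝ) 1 ∧ R p (mix α)} := by
      have heq : {α : ℝ | α ∈ Set.Icc (0 : ℝ) 1 ∧ R p (mix α)}
          = Set.Icc (0 : ℝ) 1 ∩ mix ⁻¹' {q | q ∈ stdSimplex ℝ (Fin (d + 1)) ∧ R p q} := by
        ext α
        simp only [Set.mem_inter_iff, Set.mem_setOf_eq, Set.mem_preimage]
        exact ⟨fun ⟨h1, h2⟩ => ⟨h1, hmixmem α h1, h2⟩, fun ⟨h1, _, h2⟩ => ⟨h1, h2⟩⟩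
      rw [heq]
      exact isClosed_Icc.inter ((hcont p hp).2.preimage hcont_mix)
    have hB : IsClosed {α : ℝ | α ∈ Set.Icc (0 : ℝ) 1 ∧ R (mix α) p} := by
      have heq : {α : ℝ | α ∈ Set.Icc (0 : ℝ) 1 ∧ R (mix α) p}
          = Set.Icc (0 : ℝ) 1 ∩ mix ⁻¹' {q | q ∈ stdSimplex ℝ (Fin (d + 1)) ∧ R q p} := by
        ext α
        simp only [Set.mem_inter_iff, Set.mem_setOf_eq, Set.mem_preimage]
        exact ⟨fun ⟨h1, h2⟩ => ⟨h1, hmixmem α h1, h2⟩, fun ⟨h1, _, h2⟩ => ⟨h1, h2⟩⟩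
      rw [heq]
      exact isClosed_Icc.inter ((hcont p hp).1.preimage hcont_mix)
    have hcover : Set.Icc (0 : ℝ) 1 ⊆ {α : ℝ | α ∈ Set.Icc (0 : ℝ) 1 ∧ R p (mix α)}
        ∪ {α : ℝ | α ∈ Set.Icc (0 : ℝ) 1 ∧ R (mix α) p} := by
      intro α hα
      rcases hcomp p hp (mix α) (hmixmem α hα) with h | h
      · exact Or.inl ⟨hα, h⟩
      · exact Or.inr ⟨hα, h⟩
    have h0mem : (0 : ℝ) ∈ Set.Icc (0 : ℝ) 1 := by norm_num
    have h1mem : (1 : ℝ) ∈ Set.Icc (0 : ℝ) 1 := by norm_num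
    have h0 : (Set.Icc (0 : ℝ) 1 ∩ {α : ℝ | α ∈ Set.Icc (0 : ℝ) 1 ∧ R p (mix α)}).Nonempty :=
      ⟨0, h0mem, h0mem, by rw [mix0]; exact (hext p hp).2⟩
    have h1 : (Set.Icc (0 : ℝ) 1 ∩ {α : ℝ | α ∈ Set.Icc (0 : ℝ) 1 ∧ R (mix α) p}).Nonempty :=
      ⟨1, h1mem, h1mem, by rw [mix1]; exact (hext p hp).1⟩
    obtain ⟨α, _, hA', hB'⟩ :=
      (isPreconnected_closed_iff.mp isPreconnected_Icc) _ _ hA hB hcover h0 h1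
    exact ⟨α, hA'.1, hA'.2, hB'.2⟩
  obtain ⟨u, huspec⟩ : ∃ u : (Fin (d + 1) → ℝ) → ℝ,
      ∀ p, ∀ _ : p ∈ stdSimplex ℝ (Fin (d + 1)),
        u p ∈ Set.Icc (0 : ℝ) 1 ∧ R p (mix (u p)) ∧ R (mix (u p)) p := by
    choose f hf using hexists
    refine ⟨fun p => if h : p ∈ stdSimplex ℝ (Fin (d + 1)) then f p h else 0, ?_⟩
    intro p hp
    simp only [dif_pos hp]
    exact hf p hp
  have humem : ∀ p ∈ stdSimplex ℝ (Fin (d + 1)), u p ∈ Set.Icc (0 : ℝ) 1 :=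
    fun p hp => (huspec p hp).1
  have husim : ∀ p ∈ stdSimplex ℝ (Fin (d + 1)), R p (mix (u p)) ∧ R (mix (u p)) p :=
    fun p hp => (huspec p hp).2
  have huuniq : ∀ p ∈ stdSimplex ℝ (Fin (d + 1)), ∀ α ∈ Set.Icc (0 : ℝ) 1,
      R p (mix α) → R (mix α) p → α = u p := by
    intro p hp α hα h1 h2
    by_contra hne
    rcases lt_or_gt_of_ne hne with hlt | hgt
    · exact (hmono' (u p) α (humem p hp) hα hlt).2
        (htrans _ (hmixmem α hα) _ hp _ (hmixmem _ (humem p hp)) h2 (husim p hp).1)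
    · exact (hmono' α (u p) hα (humem p hp) hgt).2
        (htrans _ (hmixmem _ (humem p hp)) _ hp _ (hmixmem α hα) (husim p hp).2 h1)
  have humix : ∀ α ∈ Set.Icc (0 : ℝ) 1, u (mix α) = α :=
    fun α hα => (huuniq (mix α) (hmixmem α hα) α hα (hrefl _ (hmixmem α hα))
      (hrefl _ (hmixmem α hα))).symm
  have hu1 : u (Pi.single i₀ 1) = 1 := by
    rw [← mix1]; exact humix 1 (by norm_num)
  have hu0 : u (Pi.single i₁ 1) = 0 := by
    rw [← mix0]; exact humix 0 (by norm_num)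
  have hrep : ∀ p ∈ stdSimplex ℝ (Fin (d + 1)), ∀ q ∈ stdSimplex ℝ (Fin (d + 1)),
      (R p q ↔ u q ≤ u p) := by
    intro p hp q hq
    constructor
    · intro h
      by_contra hlt
      push_neg at hlt
      exact (hmono' (u q) (u p) (humem q hq) (humem p hp) hlt).2
        (htrans _ (hmixmem _ (humem p hp)) _ hp _ (hmixmem _ (humem q hq))
          (husim p hp).2 (htrans _ hp _ hq _ (hmixmem _ (humem q hq)) h (husim q hq).1))
    · intro h
      rcases eq_or_lt_of_le h with heq | hlt
      · have h2 := (husim q hq).2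
        rw [heq] at h2
        exact htrans _ hp _ (hmixmem _ (humem p hp)) _ hq (husim p hp).1 h2
      · have hm := (hmono' (u p) (u q) (humem p hp) (humem q hq) hlt).1
        exact htrans _ hp _ (hmixmem _ (humem p hp)) _ hq (husim p hp).1
          (htrans _ (hmixmem _ (humem p hp)) _ (hmixmem _ (humem q hq)) _ hq hm (husim q hq).2)
  -- the affine function
  obtain ⟨L, hLdef⟩ : ∃ L : (Fin (d + 1) → ℝ) → ℝ,
      ∀ p, L p = ∑ i, p i * u (Pi.single i 1) := ⟨_, fun _ => rfl⟩
  have hLlin : ∀ (a b : ℝ) (x y : Fin (d + 1) → ℝ),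
      L (a • x + b • y) = a * L x + b * L y := by
    intro a b x y
    simp only [hLdef, Pi.add_apply, Pi.smul_apply, smul_eq_mul, add_mul,
      Finset.sum_add_distrib, Finset.mul_sum, mul_assoc]
  have hLsingle : ∀ k, L (Pi.single k 1) = u (Pi.single k 1) := by
    intro k
    rw [hLdef, Finset.sum_eq_single k]
    · simp
    · intro b _ hb
      rw [Pi.single_eq_of_ne hb, zero_mul]
    · intro h
      exact absurd (Finset.mem_univ k) h
  have hLmix : ∀ α : ℝ, L (mix α) = α := by
    intro α
    rw [hmixdef, hLlin, hLsingle, hLsingle, hu1, hu0]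
    ring
  have hLmem : ∀ p ∈ stdSimplex ℝ (Fin (d + 1)), L p ∈ Set.Icc (0 : ℝ) 1 := by
    intro p hp
    rw [hLdef]
    constructor
    · exact Finset.sum_nonneg fun i _ => mul_nonneg ((hpr p hp).1 i) (humem _ (hδmem i)).1
    · calc ∑ i, p i * u (Pi.single i 1) ≤ ∑ i, p i :=
            Finset.sum_le_sum fun i _ =>
              mul_le_of_le_one_right ((hpr p hp).1 i) (humem _ (hδmem i)).2
        _ = 1 := (hpr p hp).2
  -- support
  obtain ⟨S, hSdef⟩ : ∃ S : (Fin (d + 1) → ℝ) → Finset (Fin (d + 1)),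
      ∀ p, S p = Finset.univ.filter (fun i => 0 < p i) := ⟨_, fun _ => rfl⟩
  have hSmem : ∀ p (i : Fin (d + 1)), i ∈ S p ↔ 0 < p i := by
    intro p i; rw [hSdef]; simp
  have hScard : ∀ p : Fin (d + 1) → ℝ,
      Nat.card {i : Fin (d + 1) // 0 < p i} = (S p).card := by
    intro p
    rw [Nat.card_eq_fintype_card, hSdef]
    convert Fintype.card_subtype (fun i : Fin (d + 1) => 0 < p i)
  have hSone : ∀ p ∈ stdSimplex ℝ (Fin (d + 1)), 1 ≤ (S p).card := by
    intro p hp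
    have : ∃ i, 0 < p i := by
      by_contra hall
      push_neg at hall
      have h0 : ∑ i, p i ≤ 0 := Finset.sum_nonpos fun i _ => hall i
      rw [(hpr p hp).2] at h0
      linarith
    obtain ⟨i, hi⟩ := this
    exact Finset.card_pos.mpr ⟨i, (hSmem p i).mpr hi⟩
  have hsingleOf : ∀ p ∈ stdSimplex ℝ (Fin (d + 1)), (S p).card = 1 →
      ∃ k, p = Pi.single k 1 := by
    intro p hp hc
    obtain ⟨k, hk⟩ := Finset.card_eq_one.mp hc
    refine ⟨k, ?_⟩
    have hzero : ∀ i, i ≠ k → p i = 0 := by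
      intro i hik
      by_contra h
      have hpos : 0 < p i := lt_of_le_of_ne ((hpr p hp).1 i) (Ne.symm h)
      have hmem : i ∈ S p := (hSmem p i).mpr hpos
      rw [hk] at hmem
      exact hik (Finset.mem_singleton.mp hmem)
    have hpk : p k = 1 := by
      have hs := (hpr p hp).2
      rwa [Finset.sum_eq_single k (fun b _ hb => hzero b hb)
        (fun h => absurd (Finset.mem_univ k) h)] at hs
    funext i
    by_cases hik : i = k
    · subst hik; rw [hpk, Pi.single_eq_same]
    · rw [hzero i hik, Pi.single_eq_of_ne hik]
  have hdecomp : ∀ p ∈ stdSimplex ℝ (Fin (d + 1)), 2 ≤ (S p).card →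
      ∃ j, ∃ q ∈ stdSimplex ℝ (Fin (d + 1)), 0 < p j ∧ p j < 1 ∧
        (S q).card = (S p).card - 1 ∧
        p = p j • (Pi.single j 1 : Fin (d + 1) → ℝ) + (1 - p j) • q := by
    intro p hp h2
    obtain ⟨j, hj, k, hk, hjk⟩ := Finset.one_lt_card.mp h2
    have hj' : 0 < p j := (hSmem p j).mp hj
    have hk' : 0 < p k := (hSmem p k).mp hk
    have hjk1 : p j + p k ≤ 1 := by
      have hsub : ({j, k} : Finset (Fin (d + 1))) ⊆ Finset.univ := Finset.subset_univ _
      have hle := Finset.sum_le_sum_of_subset_of_nonneg hsub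
        (fun i _ _ => (hpr p hp).1 i)
      rw [Finset.sum_pair hjk, (hpr p hp).2] at hle
      exact hle
    have hj1 : p j < 1 := by linarith
    have h1t : (0 : ℝ) < 1 - p j := by linarith
    refine ⟨j, fun i => if i = j then 0 else p i / (1 - p j), ⟨?_, ?_⟩, hj', hj1, ?_, ?_⟩
    · intro i
      by_cases hij : i = j
      · simp [hij]
      · simp only [hij, if_false]
        exact div_nonneg ((hpr p hp).1 i) h1t.le
    · have hstep1 : ∑ i, (if i = j then (0 : ℝ) else p i / (1 - p j))
          = (∑ i, (if i = j then (0 : ℝ) else p i)) / (1 - p j) := by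
        rw [Finset.sum_div]
        refine Finset.sum_congr rfl fun i _ => ?_
        by_cases hij : i = j
        · simp [hij]
        · simp [hij]
      rw [hstep1]
      have hstep2 : ∑ i, (if i = j then (0 : ℝ) else p i) = 1 - p j := by
        have hsplit : ∀ i : Fin (d + 1),
            (if i = j then (0 : ℝ) else p i) = p i - (if i = j then p i else 0) := by
          intro i; by_cases hij : i = j <;> simp [hij]
        simp only [hsplit]
        rw [Finset.sum_sub_distrib, (hpr p hp).2, Finset.sum_ite_eq' Finset.univ j p]
        simp
      rw [hstep2]
      field_simp
    · have hSq : S (fun i => if i = j then (0 : ℝ) else p i / (1 - p j)) = (S p).erase j := by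
        ext i
        rw [hSmem, Finset.mem_erase, hSmem]
        by_cases hij : i = j
        · simp [hij]
        · simp only [hij, if_false, ne_eq, not_false_eq_true, true_and]
          rw [div_pos_iff]
          constructor
          · rintro (⟨h, _⟩ | ⟨_, h⟩)
            · exact h
            · linarith
          · intro h; exact Or.inl ⟨h, h1t⟩
      rw [hSq, Finset.card_erase_of_mem hj]
    · funext i
      simp only [Pi.add_apply, Pi.smul_apply, smul_eq_mul]
      by_cases hij : i = j
      · subst hij
        rw [Pi.single_eq_same]
        simp
      · rw [Pi.single_eq_of_ne hij]
        simp only [hij, if_false, mul_zero, zero_add]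
        field_simp
  have hstep : ∀ p ∈ stdSimplex ℝ (Fin (d + 1)), 2 ≤ (S p).card →
      ∃ q ∈ stdSimplex ℝ (Fin (d + 1)), (S q).card = (S p).card - 1 ∧
        |u p - L p| < ε + |u q - L q| := by
    intro p hp h2
    obtain ⟨j, q, hq, ht0, ht1, hcard, hpeq⟩ := hdecomp p hp h2
    have e1 := husim (Pi.single j 1) (hδmem j)
    rw [hmixdef] at e1
    have e2 := husim q hq
    rw [hmixdef] at e2
    have e3' : R (p j • (Pi.single j 1 : Fin (d + 1) → ℝ) + (1 - p j) • q)
          (u p • (Pi.single i₀ 1 : Fin (d + 1) → ℝ)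
            + (1 - u p) • (Pi.single i₁ 1 : Fin (d + 1) → ℝ)) ∧
        R (u p • (Pi.single i₀ 1 : Fin (d + 1) → ℝ)
            + (1 - u p) • (Pi.single i₁ 1 : Fin (d + 1) → ℝ))
          (p j • (Pi.single j 1 : Fin (d + 1) → ℝ) + (1 - p j) • q) := by
      rw [← hpeq]
      have e3 := husim p hp
      rw [hmixdef] at e3
      exact e3
    have hkey := hred (Pi.single j 1) (hδmem j) q hq (p j) (u (Pi.single j 1)) (u q) (u p)
      ⟨ht0.le, ht1.le⟩ (humem _ (hδmem j)) (humem q hq) (humem p hp) e1 e2 e3'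
    refine ⟨q, hq, hcard, ?_⟩
    have hLp : L p = p j * u (Pi.single j 1) + (1 - p j) * L q := by
      conv_lhs => rw [hpeq]
      rw [hLlin, hLsingle]
    have hsplit : u p - L p
        = (u p - (p j * u (Pi.single j 1) + (1 - p j) * u q)) + (1 - p j) * (u q - L q) := by
      rw [hLp]; ring
    have habs : |u p - L p| ≤ |u p - (p j * u (Pi.single j 1) + (1 - p j) * u q)|
        + (1 - p j) * |u q - L q| := by
      rw [hsplit]
      refine (abs_add_le _ _).trans ?_
      rw [abs_mul, abs_of_nonneg (by linarith : (0 : ℝ) ≤ 1 - p j)]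
    have h1t' : (1 - p j) * |u q - L q| ≤ |u q - L q| := by
      nlinarith [abs_nonneg (u q - L q)]
    linarith
  have hclose2 : ∀ n : ℕ, ∀ p ∈ stdSimplex ℝ (Fin (d + 1)), (S p).card = n + 2 →
      |u p - L p| < (n + 1 : ℝ) * ε := by
    intro n
    induction n with
    | zero =>
      intro p hp hc
      obtain ⟨q, hq, hqc, hlt⟩ := hstep p hp (by omega)
      rw [hc] at hqc
      obtain ⟨k, hk⟩ := hsingleOf q hq (by omega)
      rw [hk, hLsingle, sub_self, abs_zero, add_zero] at hlt
      simpa using hlt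
    | succ n ih =>
      intro p hp hc
      obtain ⟨q, hq, hqc, hlt⟩ := hstep p hp (by omega)
      rw [hc] at hqc
      have hih := ih q hq (by omega)
      push_cast
      push_cast at hih
      linarith
  refine ⟨u, L, hrep, ?_, ?_, ?_, ?_, ?_, ?_, ?_⟩
  · -- u '' Δ = Icc 0 1
    apply Set.Subset.antisymm
    · rintro _ ⟨p, hp, rfl⟩
      exact humem p hp
    · intro x hx
      exact ⟨mix x, hmixmem x hx, humix x hx⟩
  · -- L '' Δ = Icc 0 1
    apply Set.Subset.antisymm
    · rintro _ ⟨p, hp, rfl⟩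
      exact hLmem p hp
    · intro x hx
      exact ⟨mix x, hmixmem x hx, hLmix x⟩
  · -- affine
    intro p _ q _ t _
    exact hLlin t (1 - t) p q
  · -- closeness for nondegenerate
    intro p hp h2
    rw [hScard] at h2 ⊢
    obtain ⟨n, hn⟩ : ∃ n, (S p).card = n + 2 := ⟨(S p).card - 2, by omega⟩
    rw [hn]
    have := hclose2 n p hp hn
    push_cast
    linarith
  · -- agreement on degenerate
    exact fun i => (hLsingle i).symm
  · -- uniform bound
    intro p hp
    have h1 := hSone p hp
    have hle : (S p).card ≤ d + 1 := by
      calc (S p).card ≤ Finset.univ.card := Finset.card_le_card (Finset.subset_univ _)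
        _ = d + 1 := by simp
    have hdpos : (0 : ℝ) < (d : ℝ) * ε := by
      apply mul_pos _ hε
      exact_mod_cast Nat.lt_of_lt_of_le Nat.zero_lt_one hd
    rcases eq_or_lt_of_le h1 with heq | hlt
    · obtain ⟨k, hk⟩ := hsingleOf p hp heq.symm
      rw [hk, hLsingle, sub_self, abs_zero]
      exact hdpos
    · obtain ⟨n, hn⟩ : ∃ n, (S p).card = n + 2 := ⟨(S p).card - 2, by omega⟩
      have hc := hclose2 n p hp hn
      have hnd : n + 1 ≤ d := by omega
      have : ((n : ℝ) + 1) * ε ≤ (d : ℝ) * ε := by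
        apply mul_le_mul_of_nonneg_right _ hε.le
        exact_mod_cast hnd
      linarith
  · -- uniqueness
    intro ℓ' haff hagree
    have key : ∀ n : ℕ, ∀ p ∈ stdSimplex ℝ (Fin (d + 1)), (S p).card = n + 1 →
        ℓ' p = L p := by
      intro n
      induction n with
      | zero =>
        intro p hp hc
        obtain ⟨k, hk⟩ := hsingleOf p hp hc
        rw [hk, hagree k, hLsingle]
      | succ n ih =>
        intro p hp hc
        obtain ⟨j, q, hq, ht0, ht1, hcard, hpeq⟩ := hdecomp p hp (by omega)
        have hqc : (S q).card = n + 1 := by omega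
        have h1' : ℓ' p = p j * ℓ' (Pi.single j 1) + (1 - p j) * ℓ' q := by
          conv_lhs => rw [hpeq]
          exact haff (Pi.single j 1) (hδmem j) q hq (p j) ⟨ht0.le, ht1.le⟩
        have h2' : L p = p j * L (Pi.single j 1) + (1 - p j) * L q := by
          conv_lhs => rw [hpeq]
          rw [hLlin]
        rw [h1', h2', ih q hq hqc, hLsingle, hagree j]
    intro p hp
    have h1 := hSone p hp
    obtain ⟨n, hn⟩ : ∃ n, (S p).card = n + 1 := ⟨(S p).card - 1, by omega⟩
    exact key n p hp hn
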